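/- arXiv:2501.00695 — 2 statements merged into one kernel-verified Lean document; each statement's English description precedes it below -/
import Mathlib

section
/- Let ψ : ℝ → ℝ be twice continuously differentiable, and let X, Y ∈ ℝ^{N×r} satisfy XᵀX = I_r and YᵀY = I_r (i.e. X, Y lie on the Stiefel manifold V_r(N)). For each pair 1 ≤ i < j ≤ N define f_{ij}(t,t') := ψ(‖exp(t·ℰ_{ij})X − exp(t'·ℰ_{ij})Y‖²_F), where exp is the matrix exponential. Then the sum over all pairs (i,j) with 1 ≤ i < j ≤ N of the mixed partial derivative −∂²f_{ij}/∂t∂t' evaluated at (t,t') = (0,0) equals (N−1)·ψ'(‖X−Y‖²_F)·tr(XᵀY) + 4·ψ''(‖X−Y‖²_F)·‖𝒜(XYᵀ)‖²_F. -/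
open Matrix BigOperators

/-- `ℰ_{ij} = (√2/2)(E_{ij} − E_{ji})` where `E_{ij}` is the matrix with a `1`
in entry `(i,j)` and `0` elsewhere. -/
noncomputable def calE (N : ℕ) (i j : Fin N) : Matrix (Fin N) (Fin N) ℝ :=
  (Real.sqrt 2 / 2) • (Matrix.single i j (1 : ℝ) - Matrix.single j i (1 : ℝ))

/-- The Frobenius inner product `⟨A,B⟩_F = tr(Aᵀ B)`. -/
noncomputable def frob {N r : ℕ} (A B : Matrix (Fin N) (Fin r) ℝ) : ℝ := (Aᵀ * B).trace

/-- The squared Frobenius norm `‖A‖²_F = ⟨A,A⟩_F`. -/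
noncomputable def frobSq {N r : ℕ} (A : Matrix (Fin N) (Fin r) ℝ) : ℝ := frob A A

/-- The skew-symmetrization `𝒜(A) = (A − Aᵀ)/2`. -/
noncomputable def skewPart {N : ℕ} (A : Matrix (Fin N) (Fin N) ℝ) : Matrix (Fin N) (Fin N) ℝ :=
  (1 / 2 : ℝ) • (A - Aᵀ)

open NormedSpace

section Auxiliary

lemma hasDerivAt_L_exp {N : ℕ} (L : Matrix (Fin N) (Fin N) ℝ →ₗ[ℝ] ℝ)
    (E A : Matrix (Fin N) (Fin N) ℝ) (s : ℝ) :
    HasDerivAt (fun u : ℝ => L (exp (u • E) * A)) (L (exp (s • E) * E * A)) s := by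
  letI : SeminormedRing (Matrix (Fin N) (Fin N) ℝ) := Matrix.linftyOpSemiNormedRing
  letI : NormedRing (Matrix (Fin N) (Fin N) ℝ) := Matrix.linftyOpNormedRing
  letI : NormedAlgebra ℝ (Matrix (Fin N) (Fin N) ℝ) := Matrix.linftyOpNormedAlgebra
  have h : HasDerivAt (fun u : ℝ => exp (u • E) * A) (exp (s • E) * E * A) s :=
    (hasDerivAt_exp_smul_const E s).mul_const A
  exact (L.toContinuousLinearMap.hasFDerivAt.comp_hasDerivAt s h)

lemma mixed_deriv {N : ℕ} (ψ : ℝ → ℝ) (hψ : ContDiff ℝ 2 ψ)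
    (L : Matrix (Fin N) (Fin N) ℝ →ₗ[ℝ] ℝ) (E : Matrix (Fin N) (Fin N) ℝ) (c : ℝ) :
    deriv (fun t : ℝ => deriv (fun t' : ℝ => ψ (c - 2 * L (exp ((t' - t) • E)))) 0) 0
      = -(4 * deriv (deriv ψ) (c - 2 * L 1) * (L E)^2)
        + 2 * deriv ψ (c - 2 * L 1) * L (E * E) := by
  have hψ1 : Differentiable ℝ ψ := hψ.differentiable two_ne_zero
  have hψ2 : Differentiable ℝ (deriv ψ) := by
    have h2 : ContDiff ℝ (1 + 1 : WithTop ℕ∞) ψ := by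
      have : ((2 : WithTop ℕ∞)) = 1 + 1 := by norm_num
      rwa [this] at hψ
    exact (contDiff_succ_iff_deriv.mp h2).2.2.differentiable one_ne_zero
  have hg0 : ∀ s : ℝ, HasDerivAt (fun u : ℝ => L (exp (u • E))) (L (exp (s • E) * E)) s := by
    intro s
    simpa using hasDerivAt_L_exp L E 1 s
  have hg1 : ∀ s : ℝ, HasDerivAt (fun u : ℝ => L (exp (u • E) * E))
      (L (exp (s • E) * E * E)) s := fun s => hasDerivAt_L_exp L E E s
  have inner : ∀ t : ℝ, deriv (fun t' => ψ (c - 2 * L (exp ((t' - t) • E)))) 0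
      = deriv ψ (c - 2 * L (exp ((-t) • E))) * (-2 * L (exp ((-t) • E) * E)) := by
    intro t
    have hsub : HasDerivAt (fun t' : ℝ => t' - t) 1 0 := (hasDerivAt_id 0).sub_const t
    have h1 : HasDerivAt (fun t' : ℝ => L (exp ((t' - t) • E))) (L (exp ((-t) • E) * E)) 0 := by
      have := (hg0 ((0:ℝ) - t)).comp 0 hsub
      simpa [zero_sub, Function.comp_def] using this
    have h2 : HasDerivAt (fun t' : ℝ => c - 2 * L (exp ((t' - t) • E)))
        (-2 * L (exp ((-t) • E) * E)) 0 := by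
      have := (h1.const_mul (2:ℝ)).const_sub c
      simpa using this
    have h3 := ((hψ1 _).hasDerivAt).comp 0 h2
    have h4 : HasDerivAt (fun t' => ψ (c - 2 * L (exp ((t' - t) • E))))
        (deriv ψ (c - 2 * L (exp ((-t) • E))) * (-2 * L (exp ((-t) • E) * E))) 0 := by
      simpa [Function.comp_def, zero_sub] using h3
    exact h4.deriv
  have hrw : deriv (fun t : ℝ => deriv (fun t' : ℝ => ψ (c - 2 * L (exp ((t' - t) • E)))) 0) 0
      = deriv (fun t : ℝ => deriv ψ (c - 2 * L (exp ((-t) • E)))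
          * (-2 * L (exp ((-t) • E) * E))) 0 :=
    Filter.EventuallyEq.deriv_eq (Filter.Eventually.of_forall inner)
  rw [hrw]
  have hneg : HasDerivAt (fun t : ℝ => -t) (-1 : ℝ) 0 := (hasDerivAt_id 0).neg
  have hp : HasDerivAt (fun t : ℝ => L (exp ((-t) • E))) (-(L E)) 0 := by
    have := (hg0 (-(0:ℝ))).comp 0 hneg
    simpa [Function.comp_def, neg_smul] using this
  have hq : HasDerivAt (fun t : ℝ => L (exp ((-t) • E) * E)) (-(L (E * E))) 0 := by
    have := (hg1 (-(0:ℝ))).comp 0 hneg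
    simpa [Function.comp_def, neg_smul] using this
  have harg : HasDerivAt (fun t : ℝ => c - 2 * L (exp ((-t) • E))) (2 * L E) 0 := by
    have := (hp.const_mul (2:ℝ)).const_sub c
    simpa using this
  have hu : HasDerivAt (fun t : ℝ => deriv ψ (c - 2 * L (exp ((-t) • E))))
      (deriv (deriv ψ) (c - 2 * L 1) * (2 * L E)) 0 := by
    have h5 := ((hψ2 _).hasDerivAt).comp 0 harg
    simpa [Function.comp_def, NormedSpace.exp_zero] using h5
  have hv : HasDerivAt (fun t : ℝ => -2 * L (exp ((-t) • E) * E)) (2 * L (E * E)) 0 := by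
    have := hq.const_mul (-2:ℝ)
    simpa using this
  have hF := hu.mul hv
  rw [show deriv (fun t : ℝ => deriv ψ (c - 2 * L (exp ((-t) • E))) * (-2 * L (exp ((-t) • E) * E))) 0 = _ from hF.deriv]
  simp only [neg_zero, zero_smul, NormedSpace.exp_zero, Matrix.one_mul, _root_.map_one]
  ring

lemma symSum {N : ℕ} (t : Fin N → Fin N → ℝ) (hsym : ∀ i j, t i j = t j i) :
    ∑ i : Fin N, ∑ j : Fin N, (if i < j then t i j else 0)
      = ((∑ i : Fin N, ∑ j : Fin N, t i j) - ∑ i : Fin N, t i i) / 2 := by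
  have h1 : ∑ i : Fin N, ∑ j : Fin N, (if i < j then t i j else 0)
      = ∑ i : Fin N, ∑ j : Fin N, (if j < i then t i j else 0) := by
    rw [Finset.sum_comm]
    exact Finset.sum_congr rfl fun i _ => Finset.sum_congr rfl fun j _ => by rw [hsym]
  have key : (∑ i : Fin N, ∑ j : Fin N, (if i < j then t i j else 0)) * 2
      = (∑ i : Fin N, ∑ j : Fin N, t i j) - ∑ i : Fin N, t i i := by
    have e1 : (∑ i : Fin N, ∑ j : Fin N, (if i < j then t i j else 0)) * 2
        = (∑ i : Fin N, ∑ j : Fin N, (if i < j then t i j else 0))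
          + ∑ i : Fin N, ∑ j : Fin N, (if j < i then t i j else 0) := by
      rw [← h1]; ring
    rw [e1, ← Finset.sum_add_distrib]
    have e2 : ∀ i : Fin N, (∑ j : Fin N, (if i < j then t i j else 0))
        + ∑ j : Fin N, (if j < i then t i j else 0)
        = ∑ j : Fin N, (t i j - if i = j then t i j else 0) := by
      intro i
      rw [← Finset.sum_add_distrib]
      refine Finset.sum_congr rfl fun j _ => ?_
      rcases lt_trichotomy i j with h | h | h
      · simp [h, not_lt.mpr h.le, h.ne]
      · simp [h]
      · simp [h, not_lt.mpr h.le, h.ne']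
    rw [Finset.sum_congr rfl fun i _ => e2 i]
    have e3 : ∀ i : Fin N, ∑ j : Fin N, (t i j - if i = j then t i j else 0)
        = (∑ j : Fin N, t i j) - t i i := by
      intro i
      rw [Finset.sum_sub_distrib]
      congr 1
      simp
    rw [Finset.sum_congr rfl fun i _ => e3 i, Finset.sum_sub_distrib]
  linarith [key]

lemma std_transpose {N : ℕ} (i j : Fin N) :
    (Matrix.single i j (1:ℝ))ᵀ = Matrix.single j i 1 := by
  ext a b
  simp only [Matrix.transpose_apply, Matrix.single, Matrix.of_apply]
  by_cases hh : i = b ∧ j = a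
  · simp [hh.1, hh.2]
  · rw [if_neg hh, if_neg (fun hh2 => hh ⟨hh2.2, hh2.1⟩)]

lemma calE_transpose {N : ℕ} (i j : Fin N) : (calE N i j)ᵀ = -(calE N i j) := by
  unfold calE
  rw [Matrix.transpose_smul, Matrix.transpose_sub, std_transpose, std_transpose, ← neg_sub,
    smul_neg]

lemma exp_skew_orth {N : ℕ} {E : Matrix (Fin N) (Fin N) ℝ} (hE : Eᵀ = -E) (t : ℝ) :
    (exp (t • E))ᵀ * exp (t • E) = 1 := by
  have h1 : (exp (t • E))ᵀ = exp (-(t • E)) := by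
    rw [← Matrix.exp_transpose]
    congr 1
    rw [Matrix.transpose_smul, hE, smul_neg]
  rw [h1, ← Matrix.exp_add_of_commute _ _ ((Commute.refl (t • E)).neg_left),
    neg_add_cancel, NormedSpace.exp_zero]

lemma exp_combine {N : ℕ} (E : Matrix (Fin N) (Fin N) ℝ) (s u : ℝ) :
    exp (s • E) * exp (u • E) = exp ((s + u) • E) := by
  rw [← Matrix.exp_add_of_commute _ _ (((Commute.refl E).smul_left s).smul_right u), ← add_smul]

lemma frobSq_sub {N r : ℕ} (A B : Matrix (Fin N) (Fin r) ℝ) :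
    frobSq (A - B) = (Aᵀ * A).trace - 2 * (Aᵀ * B).trace + (Bᵀ * B).trace := by
  have hBA : (Bᵀ * A).trace = (Aᵀ * B).trace := by
    rw [← Matrix.trace_transpose (Bᵀ * A), Matrix.transpose_mul, Matrix.transpose_transpose]
  simp only [frobSq, frob, Matrix.transpose_sub, Matrix.sub_mul, Matrix.mul_sub,
    Matrix.trace_sub]
  rw [hBA]; ring

lemma trace_std {N r : ℕ} (X Y : Matrix (Fin N) (Fin r) ℝ) (a b : Fin N) :
    (Xᵀ * (Matrix.single a b (1:ℝ) * Y)).trace = (X * Yᵀ) a b := by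
  have hSY : ∀ m k, (Matrix.single a b (1:ℝ) * Y) m k = if a = m then Y b k else 0 := by
    intro m k
    simp [Matrix.mul_apply, Matrix.single, ite_and, Finset.sum_ite_eq]
  simp only [Matrix.trace, Matrix.diag_apply, Matrix.mul_apply, Matrix.transpose_apply, hSY,
    mul_ite, mul_zero]
  simp [Finset.sum_ite_eq, Matrix.transpose_apply]

lemma calE_sq {N : ℕ} {i j : Fin N} (h : i ≠ j) :
    calE N i j * calE N i j
      = -((1:ℝ)/2) • (Matrix.single i i (1:ℝ) + Matrix.single j j 1) := by
  unfold calE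
  rw [Matrix.smul_mul, Matrix.mul_smul, smul_smul]
  have hc : Real.sqrt 2 / 2 * (Real.sqrt 2 / 2) = 1/2 := by
    rw [div_mul_div_comm, Real.mul_self_sqrt (by norm_num)]; norm_num
  rw [hc]
  rw [Matrix.sub_mul, Matrix.mul_sub, Matrix.mul_sub]
  have e0 : Matrix.single i j (1:ℝ) * Matrix.single i j 1 = 0 :=
    by simp [h, Ne.symm h]
  have e1 : Matrix.single j i (1:ℝ) * Matrix.single j i 1 = 0 :=
    by simp [h, Ne.symm h]
  have e2 : Matrix.single i j (1:ℝ) * Matrix.single j i 1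
      = Matrix.single i i 1 := by
    rw [Matrix.single_mul_single_same]; norm_num
  have e3 : Matrix.single j i (1:ℝ) * Matrix.single i j 1
      = Matrix.single j j 1 := by
    rw [Matrix.single_mul_single_same]; norm_num
  rw [e0, e1, e2, e3]
  ext a b
  simp only [Matrix.smul_apply, Matrix.sub_apply, Matrix.add_apply, Matrix.neg_apply,
    Matrix.zero_apply, smul_eq_mul]
  ring

lemma frobSq_skew {N : ℕ} (M : Matrix (Fin N) (Fin N) ℝ) :
    frobSq (skewPart M) = (∑ i : Fin N, ∑ j : Fin N, (M i j - M j i)^2) / 4 := by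
  simp only [frobSq, frob, skewPart, Matrix.trace, Matrix.diag_apply, Matrix.mul_apply,
    Matrix.transpose_apply, Matrix.smul_apply, Matrix.sub_apply, smul_eq_mul]
  rw [Finset.sum_comm, Finset.sum_div]
  refine Finset.sum_congr rfl fun i _ => ?_
  rw [Finset.sum_div]
  refine Finset.sum_congr rfl fun j _ => ?_
  ring

/-- The linear map `A ↦ tr(Xᵀ (A Y))`. -/
noncomputable def traceL {N r : ℕ} (X Y : Matrix (Fin N) (Fin r) ℝ) :
    Matrix (Fin N) (Fin N) ℝ →ₗ[ℝ] ℝ where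
  toFun A := (Xᵀ * (A * Y)).trace
  map_add' A B := by simp [Matrix.add_mul, Matrix.mul_add]
  map_smul' c A := by simp [Matrix.smul_mul, Matrix.mul_smul]

end Auxiliary

theorem stmt_8 (N r : ℕ) (ψ : ℝ → ℝ) (hψ : ContDiff ℝ 2 ψ)
    (X Y : Matrix (Fin N) (Fin r) ℝ)
    (hX : Xᵀ * X = 1) (hY : Yᵀ * Y = 1)
    (f : Fin N → Fin N → ℝ → ℝ → ℝ)
    (hf : ∀ i j t t', f i j t t' =
      ψ (frobSq (NormedSpace.exp (t • calE N i j) * X -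
                 NormedSpace.exp (t' • calE N i j) * Y))) :
    ∑ i : Fin N, ∑ j : Fin N,
      (if i < j then -(deriv (fun t => deriv (fun t' => f i j t t') 0) 0) else 0)
      = (N - 1 : ℝ) * deriv ψ (frobSq (X - Y)) * (Xᵀ * Y).trace
        + 4 * deriv (deriv ψ) (frobSq (X - Y)) * frobSq (skewPart (X * Yᵀ)) := by
  set M := X * Yᵀ with hMdef
  set c₀ := frobSq (X - Y) with hc₀def
  have horth : ∀ (i j : Fin N) (t : ℝ),
      (exp (t • calE N i j))ᵀ * exp (t • calE N i j) = 1 :=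
    fun i j t => exp_skew_orth (calE_transpose i j) t
  have hfe : ∀ (i j : Fin N) (t t' : ℝ), f i j t t'
      = ψ (2*(r:ℝ) - 2 * traceL X Y (exp ((t' - t) • calE N i j))) := by
    intro i j t t'
    rw [hf, frobSq_sub]
    have h1 : (((exp (t • calE N i j) * X)ᵀ) * (exp (t • calE N i j) * X)).trace = (r:ℝ) := by
      rw [Matrix.transpose_mul, Matrix.mul_assoc, ← Matrix.mul_assoc (exp (t • calE N i j))ᵀ,
        horth i j t, Matrix.one_mul, hX, Matrix.trace_one]
      simp
    have h2 : (((exp (t' • calE N i j) * Y)ᵀ) * (exp (t' • calE N i j) * Y)).trace = (r:ℝ) := by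
      rw [Matrix.transpose_mul, Matrix.mul_assoc, ← Matrix.mul_assoc (exp (t' • calE N i j))ᵀ,
        horth i j t', Matrix.one_mul, hY, Matrix.trace_one]
      simp
    have hUt : (exp (t • calE N i j))ᵀ = exp ((-t) • calE N i j) := by
      rw [← Matrix.exp_transpose]
      congr 1
      rw [Matrix.transpose_smul, calE_transpose, smul_neg, neg_smul]
    have hUV : (exp (t • calE N i j))ᵀ * exp (t' • calE N i j)
        = exp ((t' - t) • calE N i j) := by
      rw [hUt, exp_combine]
      congr 1
      ring
    have h3 : (((exp (t • calE N i j) * X)ᵀ) * (exp (t' • calE N i j) * Y)).trace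
        = traceL X Y (exp ((t' - t) • calE N i j)) := by
      rw [Matrix.transpose_mul, Matrix.mul_assoc, ← Matrix.mul_assoc (exp (t • calE N i j))ᵀ,
        hUV]
      rfl
    rw [h1, h2, h3]
    congr 1
    ring
  have hc0 : 2*(r:ℝ) - 2 * traceL X Y 1 = c₀ := by
    rw [hc₀def, frobSq_sub, hX, hY, Matrix.trace_one]
    have hL1 : traceL X Y 1 = (Xᵀ * Y).trace := by
      simp [traceL, Matrix.one_mul]
    rw [hL1]
    simp
    ring
  have key : ∀ i j : Fin N, i < j →
      -(deriv (fun t => deriv (fun t' => f i j t t') 0) 0)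
        = 2 * deriv (deriv ψ) c₀ * (M i j - M j i)^2 + deriv ψ c₀ * (M i i + M j j) := by
    intro i j hij
    have hij' : i ≠ j := Fin.ne_of_lt hij
    have hfeq : (fun t : ℝ => deriv (fun t' : ℝ => f i j t t') 0)
        = (fun t : ℝ => deriv (fun t' : ℝ =>
            ψ (2*(r:ℝ) - 2 * traceL X Y (exp ((t' - t) • calE N i j)))) 0) := by
      funext t
      congr 1
      funext t'
      exact hfe i j t t'
    rw [hfeq, mixed_deriv ψ hψ (traceL X Y) (calE N i j) (2*(r:ℝ))]
    have hstd1 : (traceL X Y) (Matrix.single i j (1:ℝ)) = M i j := trace_std X Y i j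
    have hstd2 : (traceL X Y) (Matrix.single j i (1:ℝ)) = M j i := trace_std X Y j i
    have hstd3 : (traceL X Y) (Matrix.single i i (1:ℝ)) = M i i := trace_std X Y i i
    have hstd4 : (traceL X Y) (Matrix.single j j (1:ℝ)) = M j j := trace_std X Y j j
    have hLE : traceL X Y (calE N i j) = (Real.sqrt 2 / 2) * (M i j - M j i) := by
      rw [show calE N i j = (Real.sqrt 2 / 2) •
          (Matrix.single i j (1:ℝ) - Matrix.single j i 1) from rfl,
        _root_.map_smul, map_sub, hstd1, hstd2, smul_eq_mul]
    have hLEE : traceL X Y (calE N i j * calE N i j) = -((1:ℝ)/2) * (M i i + M j j) := by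
      rw [calE_sq hij', _root_.map_smul, map_add, hstd3, hstd4, smul_eq_mul]
    rw [hLE, hLEE, hc0]
    have hs : (Real.sqrt 2 / 2)^2 = 1/2 := by
      rw [div_pow, Real.sq_sqrt (by norm_num : (0:ℝ) ≤ 2)]
      norm_num
    rw [mul_pow, hs]
    ring
  have hLHS : ∑ i : Fin N, ∑ j : Fin N,
      (if i < j then -(deriv (fun t => deriv (fun t' => f i j t t') 0) 0) else 0)
      = ∑ i : Fin N, ∑ j : Fin N, (if i < j then
          (2 * deriv (deriv ψ) c₀ * (M i j - M j i)^2 + deriv ψ c₀ * (M i i + M j j)) else 0) := by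
    refine Finset.sum_congr rfl fun i _ => Finset.sum_congr rfl fun j _ => ?_
    by_cases hij : i < j
    · rw [if_pos hij, if_pos hij, key i j hij]
    · rw [if_neg hij, if_neg hij]
  rw [hLHS, symSum _ (fun i j => by ring)]
  have htr : (Xᵀ * Y).trace = ∑ i : Fin N, M i i := by
    have h : (X * Yᵀ).trace = (Xᵀ * Y).trace := by
      rw [Matrix.trace_mul_comm, ← Matrix.trace_transpose (Yᵀ * X), Matrix.transpose_mul,
        Matrix.transpose_transpose]
    rw [← h, hMdef]
    simp [Matrix.trace, Matrix.diag]
  rw [htr, frobSq_skew M]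
  set A := deriv ψ c₀
  set B := deriv (deriv ψ) c₀
  have hTsum : ∑ i : Fin N, ∑ j : Fin N,
      (2 * B * (M i j - M j i)^2 + A * (M i i + M j j))
      = 2 * B * (∑ i : Fin N, ∑ j : Fin N, (M i j - M j i)^2)
        + 2 * (N:ℝ) * (A * ∑ i : Fin N, M i i) := by
    have h1 : ∀ i : Fin N, ∑ j : Fin N, (2 * B * (M i j - M j i)^2 + A * (M i i + M j j))
        = 2 * B * (∑ j : Fin N, (M i j - M j i)^2)
          + ((N:ℝ) * (A * M i i) + A * ∑ j : Fin N, M j j) := by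
      intro i
      rw [Finset.sum_add_distrib, ← Finset.mul_sum]
      congr 1
      calc ∑ j : Fin N, A * (M i i + M j j)
          = ∑ j : Fin N, (A * M i i + A * M j j) :=
            Finset.sum_congr rfl fun j _ => by ring
        _ = (N:ℝ) * (A * M i i) + A * ∑ j : Fin N, M j j := by
            rw [Finset.sum_add_distrib, Finset.sum_const, ← Finset.mul_sum, Finset.card_univ,
              Fintype.card_fin, nsmul_eq_mul]
    rw [Finset.sum_congr rfl fun i _ => h1 i, Finset.sum_add_distrib, ← Finset.mul_sum,
      Finset.sum_add_distrib, ← Finset.mul_sum, Finset.sum_const, Finset.card_univ,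
      Fintype.card_fin, nsmul_eq_mul]
    rw [← Finset.mul_sum]
    ring
  have hTdiag : ∑ i : Fin N, (2 * B * (M i i - M i i)^2 + A * (M i i + M i i))
      = 2 * (A * ∑ i : Fin N, M i i) := by
    calc ∑ i : Fin N, (2 * B * (M i i - M i i)^2 + A * (M i i + M i i))
        = ∑ i : Fin N, 2 * (A * M i i) := Finset.sum_congr rfl fun i _ => by ring
      _ = 2 * (A * ∑ i : Fin N, M i i) := by
          rw [← Finset.mul_sum]
          congr 1
          rw [← Finset.mul_sum]
  rw [hTsum, hTdiag]
  ring
end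

section
/- Let X, Y ∈ ℝ^{N×N} be symmetric matrices and let A, B ∈ ℝ^{N×N} be arbitrary. Then the sum over all pairs (i,j) with 1 ≤ i < j ≤ N of tr[(ℰ_{ij}X − Xℰ_{ij})A] · tr[(ℰ_{ij}Y − Yℰ_{ij})B] equals 4·⟨𝒜(𝒮(A)X), 𝒜(𝒮(B)Y)⟩_F. -/
open Matrix BigOperators

/-- The symmetrization `𝒮(A) = (A + Aᵀ)/2`. -/
noncomputable def symPart {N : ℕ} (A : Matrix (Fin N) (Fin N) ℝ) : Matrix (Fin N) (Fin N) ℝ :=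
  (1 / 2 : ℝ) • (A + Aᵀ)

lemma trace_std_s9 {N : ℕ} (i j : Fin N) (M : Matrix (Fin N) (Fin N) ℝ) :
    (Matrix.single i j (1:ℝ) * M).trace = M j i := by
  simp only [Matrix.trace, Matrix.diag]
  rw [Finset.sum_eq_single i]
  · simp
  · intro b _ hb
    simp [Matrix.mul_apply, Matrix.single, Ne.symm hb]
  · simp

lemma trace_calE {N : ℕ} (i j : Fin N) (X A : Matrix (Fin N) (Fin N) ℝ) :
    ((calE N i j * X - X * calE N i j) * A).trace
      = Real.sqrt 2 / 2 *
        ((A*X) i j - (X*A) i j - (A*X) j i + (X*A) j i) := by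
  have h1 : (calE N i j * X - X * calE N i j) * A
      = (Real.sqrt 2 / 2) • (Matrix.single i j (1:ℝ) * (X*A)
          - Matrix.single j i (1:ℝ) * (X*A)
          - Matrix.single i j (1:ℝ) * (A*X)
          + Matrix.single j i (1:ℝ) * (A*X))
      + (Real.sqrt 2 / 2) • (Matrix.single i j (1:ℝ) * (A*X)
          - Matrix.single j i (1:ℝ) * (A*X)
          - X * (Matrix.single i j (1:ℝ) * A)
          + X * (Matrix.single j i (1:ℝ) * A)) := by
    simp only [calE, Matrix.smul_mul, Matrix.mul_smul, Matrix.sub_mul, Matrix.mul_sub,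
      Matrix.mul_assoc]
    module
  rw [h1]
  simp only [Matrix.trace_add, Matrix.trace_sub, Matrix.trace_smul,
    Matrix.trace_mul_comm X, Matrix.mul_assoc, trace_std_s9, smul_eq_mul]
  ring

lemma entry_eq {N : ℕ} (i j : Fin N) (X A : Matrix (Fin N) (Fin N) ℝ) (hX : Xᵀ = X) :
    (A*X) i j - (X*A) i j - (A*X) j i + (X*A) j i
      = 4 * skewPart (symPart A * X) i j := by
  have hx : ∀ a b : Fin N, X a b = X b a := by
    intro a b
    conv_lhs => rw [← hX]
    rw [Matrix.transpose_apply]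
  have hP : skewPart (symPart A * X) = (1/4 : ℝ) • (A*X + Aᵀ*X - X*A - X*Aᵀ) := by
    simp only [skewPart, symPart, Matrix.transpose_mul, hX, Matrix.transpose_smul,
      Matrix.transpose_add, Matrix.transpose_transpose, Matrix.smul_mul, Matrix.mul_smul,
      Matrix.add_mul, Matrix.mul_add]
    module
  rw [hP]
  simp only [Matrix.smul_apply, Matrix.sub_apply, Matrix.add_apply, smul_eq_mul]
  have h1 : (Aᵀ*X) i j = (X*A) j i := by
    simp only [Matrix.mul_apply, Matrix.transpose_apply]
    refine Finset.sum_congr rfl fun k _ => ?_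
    rw [hx j k]; ring
  have h2 : (X*Aᵀ) i j = (A*X) j i := by
    simp only [Matrix.mul_apply, Matrix.transpose_apply]
    refine Finset.sum_congr rfl fun k _ => ?_
    rw [hx i k]; ring
  rw [h1, h2]; ring

lemma sum_lt_half {N : ℕ} (H : Fin N → Fin N → ℝ) (hsym : ∀ i j, H j i = H i j)
    (hdiag : ∀ i, H i i = 0) :
    ∑ i : Fin N, ∑ j : Fin N, H i j
      = 2 * ∑ i : Fin N, ∑ j : Fin N, (if i < j then H i j else 0) := by
  have split : ∀ i j : Fin N,
      H i j = (if i < j then H i j else 0) + (if j < i then H i j else 0) := by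
    intro i j
    rcases lt_trichotomy i j with h | h | h
    · simp [h, asymm h]
    · subst h; simp [hdiag]
    · simp [h, asymm h, not_lt_of_gt h]
  calc ∑ i : Fin N, ∑ j : Fin N, H i j
      = ∑ i : Fin N, ∑ j : Fin N,
          ((if i < j then H i j else 0) + (if j < i then H i j else 0)) := by
        refine Finset.sum_congr rfl fun i _ => Finset.sum_congr rfl fun j _ => split i j
    _ = (∑ i : Fin N, ∑ j : Fin N, (if i < j then H i j else 0))
        + ∑ i : Fin N, ∑ j : Fin N, (if j < i then H i j else 0) := by
        simp [Finset.sum_add_distrib]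
    _ = 2 * ∑ i : Fin N, ∑ j : Fin N, (if i < j then H i j else 0) := by
        rw [Finset.sum_comm (f := fun i j => (if j < i then H i j else 0))]
        have : ∀ i j : Fin N, (if i < j then H j i else 0) = (if i < j then H i j else 0) := by
          intro i j; rw [hsym]
        simp only [this]
        ring

lemma skew_skew {N : ℕ} (M : Matrix (Fin N) (Fin N) ℝ) (i j : Fin N) :
    skewPart M j i = - skewPart M i j := by
  simp only [skewPart, Matrix.smul_apply, Matrix.sub_apply, Matrix.transpose_apply, smul_eq_mul]
  ring

theorem stmt_9 (N : ℕ) (X Y A B : Matrix (Fin N) (Fin N) ℝ)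
    (hX : Xᵀ = X) (hY : Yᵀ = Y) :
    ∑ i : Fin N, ∑ j : Fin N,
      (if i < j then
        ((calE N i j * X - X * calE N i j) * A).trace *
        ((calE N i j * Y - Y * calE N i j) * B).trace
      else 0)
      = 4 * frob (skewPart (symPart A * X)) (skewPart (symPart B * Y)) := by
  set P := skewPart (symPart A * X) with hPdef
  set Q := skewPart (symPart B * Y) with hQdef
  have hterm : ∀ i j : Fin N,
      ((calE N i j * X - X * calE N i j) * A).trace *
        ((calE N i j * Y - Y * calE N i j) * B).trace = 8 * (P i j * Q i j) := by
    intro i j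
    rw [trace_calE, trace_calE, entry_eq i j X A hX, entry_eq i j Y B hY, ← hPdef, ← hQdef]
    have h2 : Real.sqrt 2 * Real.sqrt 2 = 2 := Real.mul_self_sqrt (by norm_num)
    have key : ∀ p q : ℝ, Real.sqrt 2 / 2 * (4 * p) * (Real.sqrt 2 / 2 * (4 * q))
        = Real.sqrt 2 * Real.sqrt 2 * (4 * (p * q)) := by intro p q; ring
    rw [key, h2]
    ring
  have hfrob : frob P Q = ∑ i : Fin N, ∑ j : Fin N, P i j * Q i j := by
    rw [frob, Matrix.trace]
    simp only [Matrix.diag, Matrix.mul_apply, Matrix.transpose_apply]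
    rw [Finset.sum_comm]
  have hH : ∑ i : Fin N, ∑ j : Fin N, (fun i j => P i j * Q i j) i j
      = 2 * ∑ i : Fin N, ∑ j : Fin N, (if i < j then P i j * Q i j else 0) := by
    apply sum_lt_half
    · intro i j
      rw [hPdef, hQdef, skew_skew (symPart A * X), skew_skew (symPart B * Y)]
      ring
    · intro i
      have hz : skewPart (symPart A * X) i i = 0 := by
        linarith [skew_skew (symPart A * X) i i]
      rw [hPdef, hz]; ring
  simp only at hH
  have : ∑ i : Fin N, ∑ j : Fin N,
      (if i < j then
        ((calE N i j * X - X * calE N i j) * A).trace *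
        ((calE N i j * Y - Y * calE N i j) * B).trace
      else 0)
      = ∑ i : Fin N, ∑ j : Fin N, (if i < j then 8 * (P i j * Q i j) else 0) := by
    refine Finset.sum_congr rfl fun i _ => Finset.sum_congr rfl fun j _ => ?_
    split_ifs with h
    · exact hterm i j
    · rfl
  rw [this, hfrob, hH, ← mul_assoc]
  norm_num
  rw [Finset.mul_sum]
  refine Finset.sum_congr rfl fun i _ => ?_
  rw [Finset.mul_sum]
  refine Finset.sum_congr rfl fun j _ => ?_
  split_ifs <;> ring
end
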